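/- A factorial upper bound on the height of extreme CAR mechanisms: if π is an extreme CAR mechanism on a finite set E whose support has m elements, then there exists a positive integer k with k ≤ m! such that k·π(A) is an integer for every nonempty subset A of E. In particular, if |E| = n, one may take k ≤ n!. -/

import Mathlib

/-- A CAR (Coarsening At Random) mechanism on a finite nonempty set `E`:
a function `π` from subsets of `E` to the reals, vanishing on `∅` (so that it is
effectively a function on the nonempty subsets), nonnegative, and such that
for every `x ∈ E` the sum of `π A` over all subsets `A` containing `x` equals `1`. -/
def IsCAR {E : Type*} [Fintype E] [DecidableEq E] (π : Finset E → ℝ) : Prop :=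
  π ∅ = 0 ∧ (∀ A : Finset E, 0 ≤ π A) ∧
    ∀ x : E, ∑ A ∈ Finset.univ.filter (fun A : Finset E => x ∈ A), π A = 1

/-- The support of a coarsening mechanism: the collection of subsets with positive mass. -/
def carSupport {E : Type*} (π : Finset E → ℝ) : Set (Finset E) := {A | 0 < π A}

open Matrix

/-- Determinant of an integer 0/1 matrix is at most `card!` in absolute value. -/
lemma det_natAbs_le_factorial {ι : Type*} [Fintype ι] [DecidableEq ι]
    (Q : Matrix ι ι ℤ) (h : ∀ i j, Q i j = 0 ∨ Q i j = 1) :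
    Q.det.natAbs ≤ (Fintype.card ι).factorial := by
  rw [Matrix.det_apply]
  calc (∑ σ : Equiv.Perm ι, Equiv.Perm.sign σ • ∏ i, Q (σ i) i).natAbs
      ≤ ∑ σ : Equiv.Perm ι, (Equiv.Perm.sign σ • ∏ i, Q (σ i) i).natAbs := by
        have := Finset.abs_sum_le_sum_abs
          (fun σ : Equiv.Perm ι => Equiv.Perm.sign σ • ∏ i, Q (σ i) i) Finset.univ
        simp only [Int.abs_eq_natAbs] at this
        exact_mod_cast this
    _ ≤ ∑ _σ : Equiv.Perm ι, 1 := by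
        apply Finset.sum_le_sum
        intro σ _
        have h0 : (0:ℤ) ≤ ∏ i, Q (σ i) i := by
          apply Finset.prod_nonneg; intro i _
          rcases h (σ i) i with h' | h' <;> simp [h']
        have h1 : (∏ i, Q (σ i) i) ≤ 1 := by
          apply Finset.prod_le_one
          · intro i _; rcases h (σ i) i with h' | h' <;> simp [h']
          · intro i _; rcases h (σ i) i with h' | h' <;> simp [h']
        have : (Equiv.Perm.sign σ • ∏ i, Q (σ i) i).natAbs = (∏ i, Q (σ i) i).natAbs := by
          rw [Units.smul_def, smul_eq_mul, Int.natAbs_mul]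
          rcases Int.units_eq_one_or (Equiv.Perm.sign σ) with h' | h' <;> simp [h']
        rw [this]
        omega
    _ = (Fintype.card ι).factorial := by simp [Fintype.card_perm]

/-- From an injective `mulVec` one can select rows forming an invertible square submatrix. -/
lemma exists_invertible_row_submatrix {K : Type*} [Field K] {m n : Type*}
    [Fintype m] [Fintype n] [DecidableEq n]
    (M : Matrix m n K) (h : Function.Injective M.mulVec) :
    ∃ r : n → m, Function.Injective r ∧ (M.submatrix r id).det ≠ 0 := by
  classical
  have hrank : M.rank = Fintype.card n := by
    have : Function.Injective M.mulVecLin := h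
    rw [Matrix.rank, LinearMap.finrank_range_of_inj this,
      Module.finrank_fintype_fun_eq_card]
  have hspan : Submodule.span K (Set.range (fun e : m => M e)) = ⊤ := by
    apply Submodule.eq_top_of_finrank_eq
    rw [show (Set.range fun e : m => M e) = Set.range M.row from rfl,
      ← Matrix.rank_eq_finrank_span_row, hrank, Module.finrank_fintype_fun_eq_card]
  obtain ⟨b, hbt, hbspan, hbind⟩ :=
    exists_linearIndependent K (Set.range (fun e : m => M e))
  rw [hspan] at hbspan
  have hbfin : b.Finite := hbind.setFinite
  haveI : Fintype b := hbfin.fintype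
  let bas : Module.Basis b K (n → K) := Module.Basis.mk hbind (by rw [Subtype.range_coe, hbspan])
  have hcard : Fintype.card n = Fintype.card b := by
    rw [← Module.finrank_fintype_fun_eq_card (R := K) (η := n),
      Module.finrank_eq_card_basis bas]
  let e : n ≃ b := Fintype.equivOfCardEq hcard
  have hpick : ∀ x : b, ∃ i : m, M i = (x : n → K) := fun x => hbt x.2
  choose ρ hρ using hpick
  refine ⟨fun j => ρ (e j), ?_, ?_⟩
  · intro j j' hjj'
    simp only at hjj'
    have h2 : M (ρ (e j)) = M (ρ (e j')) := by rw [hjj']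
    rw [hρ (e j), hρ (e j')] at h2
    exact e.injective (Subtype.ext h2)
  · have hrows : LinearIndependent K (fun j => (M.submatrix (fun j => ρ (e j)) id) j) := by
      have : (fun j => (M.submatrix (fun j => ρ (e j)) id) j)
          = (fun x : b => (x : n → K)) ∘ e := by
        funext j
        simp only [Function.comp]
        funext i
        have := hρ (e j)
        simp [Matrix.submatrix_apply, ← this]
      rw [this]
      exact hbind.comp e e.injective
    have := Matrix.linearIndependent_rows_iff_isUnit.mp hrows
    exact ((Matrix.isUnit_iff_isUnit_det _).mp this).ne_zero

/-- A factorial upper bound on the height of extreme CAR mechanisms: if `π` is an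
extreme CAR mechanism (the unique CAR mechanism with its support) whose support has
`m` elements, then some positive integer `k ≤ m!` makes every `k · π A` an integer;
in particular, since `m ≤ |E| = n`, one may take `k ≤ n!`. -/
theorem extreme_car_height_le_factorial {E : Type*} [Fintype E] [DecidableEq E] [Nonempty E]
    (π : Finset E → ℝ) (hπ : IsCAR π)
    (hext : ∀ π' : Finset E → ℝ, IsCAR π' → carSupport π' = carSupport π → π' = π)
    (m : ℕ) (hm : (carSupport π).ncard = m) :
    ∃ k : ℕ, 0 < k ∧ k ≤ Nat.factorial m ∧ k ≤ Nat.factorial (Fintype.card E) ∧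
      ∀ A : Finset E, ∃ z : ℤ, (k : ℝ) * π A = (z : ℝ) := by
  classical
  obtain ⟨hπ0, hπnn, hπsum⟩ := hπ
  set Sf : Finset (Finset E) := Finset.univ.filter (fun A => 0 < π A) with hSf
  have hmem : ∀ A : Finset E, A ∈ Sf ↔ 0 < π A := by
    intro A; simp [hSf]
  have hSupp : carSupport π = ↑Sf := by
    ext A; simp [carSupport, hSf]
  have hcardm : Fintype.card Sf = m := by
    rw [← hm, hSupp, Set.ncard_coe_finset, Fintype.card_coe]
  have hzero : ∀ A : Finset E, A ∉ Sf → π A = 0 := by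
    intro A hA
    have h1 := hπnn A
    have h2 : ¬ 0 < π A := fun h => hA ((hmem A).mpr h)
    linarith
  let M : Matrix E Sf ℝ := fun e A => if e ∈ (A : Finset E) then 1 else 0
  -- summation conversion
  have key : ∀ (f : Finset E → ℝ), (∀ A, A ∉ Sf → f A = 0) → ∀ x : E,
      (M.mulVec (fun A : Sf => f ↑A)) x
        = ∑ A ∈ Finset.univ.filter (fun A : Finset E => x ∈ A), f A := by
    intro f hf x
    rw [Finset.sum_filter]
    show (∑ A : Sf, M x A * f ↑A) = _
    calc ∑ A : Sf, M x A * f ↑A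
        = ∑ A : Sf, (if x ∈ (A : Finset E) then f ↑A else 0) := by
          apply Finset.sum_congr rfl; intro A _
          simp [M, ite_mul]
      _ = ∑ A ∈ Sf, (if x ∈ A then f A else 0) :=
          Finset.sum_coe_sort Sf (fun A => if x ∈ A then f A else 0)
      _ = ∑ A : Finset E, (if x ∈ A then f A else 0) := by
          apply Finset.sum_subset (Finset.subset_univ _)
          intro A _ hA; simp [hf A hA]
  -- injectivity of mulVec
  have hinjlin : Function.Injective M.mulVecLin := by
    rw [← LinearMap.ker_eq_bot, LinearMap.ker_eq_bot']
    intro d hd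
    have hd' : M.mulVec d = 0 := hd
    set D : Finset E → ℝ := fun A => if h : A ∈ Sf then d ⟨A, h⟩ else 0 with hD
    have hDzero : ∀ A, A ∉ Sf → D A = 0 := by intro A hA; simp [hD, hA]
    have hDval : ∀ A : Sf, D ↑A = d A := by intro A; simp [hD, A.2]
    have hDfun : (fun A : Sf => D ↑A) = d := funext hDval
    have hDsum : ∀ x : E,
        ∑ A ∈ Finset.univ.filter (fun A : Finset E => x ∈ A), D A = 0 := by
      intro x
      rw [← key D hDzero x, hDfun, hd']
      rfl
    obtain ⟨ε, hε0, hε⟩ : ∃ ε : ℝ, 0 < ε ∧ ∀ A ∈ Sf, ε * |D A| < π A := by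
      rcases Finset.eq_empty_or_nonempty Sf with hS | hS
      · exact ⟨1, one_pos, by simp [hS]⟩
      · set ε := Sf.inf' hS (fun A => π A / (|D A| + 1)) with hεdef
        have hε0 : 0 < ε := by
          rw [hεdef, Finset.lt_inf'_iff]
          intro A hA
          exact div_pos ((hmem A).mp hA) (by positivity)
        refine ⟨ε, hε0, fun A hA => ?_⟩
        have h1 : ε ≤ π A / (|D A| + 1) := Finset.inf'_le _ hA
        have h2 : (0:ℝ) < |D A| + 1 := by positivity
        have h3 : ε * (|D A| + 1) ≤ π A := (le_div_iff₀ h2).mp h1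
        nlinarith [abs_nonneg (D A)]
    set π' : Finset E → ℝ := fun A => π A + ε * D A with hπ'
    have hempty : (∅ : Finset E) ∉ Sf := by
      rw [hmem, hπ0]; exact lt_irrefl 0
    have hπ'pos : ∀ A ∈ Sf, 0 < π' A := by
      intro A hA
      have h1 := hε A hA
      have h2 : -(ε * |D A|) ≤ ε * D A := by
        have := neg_abs_le (ε * D A)
        rw [abs_mul, abs_of_pos hε0] at this
        linarith
      simp only [hπ']
      linarith
    have hπ'zero : ∀ A, A ∉ Sf → π' A = 0 := by
      intro A hA
      simp [hπ', hzero A hA, hDzero A hA]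
    have hcar' : IsCAR π' := by
      refine ⟨hπ'zero ∅ hempty, ?_, ?_⟩
      · intro A
        by_cases hA : A ∈ Sf
        · exact le_of_lt (hπ'pos A hA)
        · rw [hπ'zero A hA]
      · intro x
        simp only [hπ']
        rw [Finset.sum_add_distrib, hπsum x, ← Finset.mul_sum, hDsum x]
        ring
    have hsupp' : carSupport π' = carSupport π := by
      ext A
      simp only [carSupport, Set.mem_setOf_eq]
      by_cases hA : A ∈ Sf
      · simp [hπ'pos A hA, (hmem A).mp hA]
      · rw [hzero A hA, hπ'zero A hA]
    have heq := hext π' hcar' hsupp'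
    funext A
    have h1 := congrFun heq ↑A
    simp only [hπ'] at h1
    have h2 : ε * D ↑A = 0 := by linarith
    have h3 : D ↑A = 0 := by
      rcases mul_eq_zero.mp h2 with h | h
      · exact absurd h (ne_of_gt hε0)
      · exact h
    rw [← hDval A, h3]
    rfl
  have hinj : Function.Injective M.mulVec := hinjlin
  obtain ⟨r, hrinj, hrdet⟩ := exists_invertible_row_submatrix M hinj
  set Q : Matrix Sf Sf ℤ := fun i A => if r i ∈ (A : Finset E) then 1 else 0 with hQ
  have hQmap : Q.map (Int.castRingHom ℝ) = M.submatrix r id := by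
    ext i A
    rw [Matrix.map_apply, Matrix.submatrix_apply]
    simp only [hQ, M, id]
    split_ifs <;> simp
  have hdetQ : ((Q.det : ℤ) : ℝ) = (M.submatrix r id).det := by
    have h := RingHom.map_det (Int.castRingHom ℝ) Q
    rw [RingHom.mapMatrix_apply, hQmap] at h
    exact_mod_cast h
  have hQdet_ne : Q.det ≠ 0 := by
    intro h0
    apply hrdet
    rw [← hdetQ, h0, Int.cast_zero]
  refine ⟨Q.det.natAbs, Int.natAbs_pos.mpr hQdet_ne, ?_, ?_, ?_⟩
  · have := det_natAbs_le_factorial Q (by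
      intro i j
      simp only [hQ]
      split <;> simp)
    rwa [hcardm] at this
  · have hmn : m ≤ Fintype.card E := by
      rw [← hcardm]
      exact Fintype.card_le_of_injective r hrinj
    calc Q.det.natAbs ≤ m.factorial := by
          have := det_natAbs_le_factorial Q (by
            intro i j
            simp only [hQ]
            split <;> simp)
          rwa [hcardm] at this
      _ ≤ (Fintype.card E).factorial := Nat.factorial_le hmn
  · -- integrality
    have hones : (M.submatrix r id).mulVec (fun A : Sf => π ↑A) = fun _ => 1 := by
      funext i
      have h1 := key π hzero (r i)
      rw [hπsum (r i)] at h1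
      show ∑ A : Sf, (M.submatrix r id) i A * π ↑A = 1
      rw [← h1]
      rfl
    have hcram : ∀ A : Sf, (Q.det : ℝ) * π ↑A = ((∑ B : Sf, Q.adjugate A B : ℤ) : ℝ) := by
      intro A
      have h1 : (M.submatrix r id).adjugate.mulVec
          ((M.submatrix r id).mulVec (fun B : Sf => π ↑B))
          = (M.submatrix r id).det • (fun B : Sf => π ↑B) := by
        rw [Matrix.mulVec_mulVec, Matrix.adjugate_mul, Matrix.smul_mulVec,
          Matrix.one_mulVec]
      rw [hones] at h1
      have h2 := congrFun h1 A
      have hadj : (M.submatrix r id).adjugate = (Q.adjugate).map (Int.castRingHom ℝ) := by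
        have h := RingHom.map_adjugate (Int.castRingHom ℝ) Q
        rw [RingHom.mapMatrix_apply, RingHom.mapMatrix_apply, hQmap] at h
        exact h.symm
      have h3 : ((M.submatrix r id).adjugate.mulVec (fun _ => (1:ℝ))) A
          = ((∑ B : Sf, Q.adjugate A B : ℤ) : ℝ) := by
        rw [hadj]
        simp [Matrix.mulVec, dotProduct, Matrix.map_apply]
      rw [h3] at h2
      have h4 : ((M.submatrix r id).det • (fun B : Sf => π ↑B)) A
          = (Q.det : ℝ) * π ↑A := by
        rw [← hdetQ]
        simp [Pi.smul_apply, smul_eq_mul]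
      rw [h4] at h2
      exact h2.symm
    intro A
    by_cases hA : A ∈ Sf
    · have hw := hcram ⟨A, hA⟩
      rcases Int.natAbs_eq Q.det with h | h
      · refine ⟨∑ B : Sf, Q.adjugate ⟨A, hA⟩ B, ?_⟩
        have h2 : ((Q.det.natAbs : ℤ)) = Q.det := by omega
        have h3 := congrArg (fun z : ℤ => (z : ℝ)) h2
        simp only [Int.cast_natCast] at h3
        rw [h3]
        exact hw
      · refine ⟨-(∑ B : Sf, Q.adjugate ⟨A, hA⟩ B), ?_⟩
        have h2 : ((Q.det.natAbs : ℤ)) = -Q.det := by omega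
        have h3 := congrArg (fun z : ℤ => (z : ℝ)) h2
        simp only [Int.cast_natCast, Int.cast_neg] at h3
        rw [h3, neg_mul, hw]
        push_cast
        ring
    · exact ⟨0, by rw [hzero A hA]; simp⟩
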